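/- If in a solution each part Rⱼ contains exactly one element of each Sᵢ except that it contains exactly two elements of S_{2i} for each even index 2i with φ(i) = j, and the target weight of each part is T + B where T is the transversal weight, then for each j the sum Σ_{i : φ(i) = j} v_i equals B; hence the sets B_j = {v_i : φ(i) = j} form a solution to the Bin Packing instance. -/

import Mathlib

open Finset

private lemma sum_range_even_odd {M : Type*} [AddCommMonoid M] (g : ℕ → M) :
    ∀ n, ∑ i ∈ range (2*n+1), g i = ∑ t ∈ range (n+1), g (2*t) + ∑ t ∈ range n, g (2*t+1)
  | 0 => by simp
  | n+1 => by
    have h : 2*(n+1)+1 = (2*n+1)+1+1 := by ring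
    rw [h, sum_range_succ, sum_range_succ, sum_range_even_odd g n,
        sum_range_succ (fun t => g (2*t)) (n+1), sum_range_succ (fun t => g (2*t+1)) n]
    have h1 : 2*(n+1) = 2*n+1+1 := by ring
    rw [h1]
    abel


/-- Soundness of the reduction: with the weighted rows
`S 0, …, S (2n)` as in the reduction (first row elements weigh `(kB)²`, last
row elements weigh `(kB)⁴`, intermediate even-indexed rows weigh `1/(2n−2)`
each, and row `2t+1` elements weigh `v t` with `∑ v t = kB`), suppose part `R`
(the part `R j` of a solution, with `φ` recording which part receives the
duplicate of each even row) contains exactly two elements of row `2t+1` when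
`φ t = j` and exactly one element of every other row.  If the total weight of
`R` is `T + B` with `T = (kB)² + (kB)⁴ + 1/2 + kB`, then
`∑_{t : φ t = j} v t = B`. -/
theorem reduction_soundness {α : Type*} [DecidableEq α]
    (n k B : ℕ) (hn : 2 ≤ n) (hk : 1 ≤ k) (hB : 1 ≤ B)
    (S : ℕ → Finset α)
    (hdisj : ∀ i i', i ≠ i' → Disjoint (S i) (S i'))
    (w : α → ℚ) (v : ℕ → ℚ)
    (hv0 : ∀ j, 0 ≤ v j) (hvsum : ∑ t ∈ range n, v t = (k * B : ℚ))
    (hw0 : ∀ x ∈ S 0, w x = ((k * B : ℚ)) ^ 2)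
    (hwlast : ∀ x ∈ S (2 * n), w x = ((k * B : ℚ)) ^ 4)
    (hwodd : ∀ i, Even i → i ≠ 0 → i ≠ 2 * n → i < 2 * n →
      ∀ x ∈ S i, w x = 1 / (2 * (n : ℚ) - 2))
    (hweven : ∀ t < n, ∀ x ∈ S (2 * t + 1), w x = v t)
    (φ : ℕ → ℕ) (j : ℕ)
    (R : Finset α)
    (hR : R ⊆ (range (2 * n + 1)).biUnion S)
    (hRdup : ∀ t < n, φ t = j → (R ∩ S (2 * t + 1)).card = 2)
    (hRone : ∀ i ∈ range (2 * n + 1),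
      (¬ ∃ t < n, i = 2 * t + 1 ∧ φ t = j) → (R ∩ S i).card = 1)
    (hweight : ∑ x ∈ R, w x =
      (((k * B : ℚ)) ^ 2 + ((k * B : ℚ)) ^ 4 + 1 / 2 + (k * B : ℚ)) + (B : ℚ)) :
    ∑ t ∈ (range n).filter (fun t => φ t = j), v t = (B : ℚ) := by
  -- decompose the sum over R into rows
  have gconst : ∀ i c, (∀ x ∈ S i, w x = c) →
      ∑ x ∈ R ∩ S i, w x = ((R ∩ S i).card : ℚ) * c := by
    intro i c hc
    rw [Finset.sum_congr rfl (fun x hx => hc x (Finset.mem_inter.1 hx).2),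
      Finset.sum_const, nsmul_eq_mul]
  have hdecomp : ∑ x ∈ R, w x = ∑ i ∈ range (2*n+1), ∑ x ∈ R ∩ S i, w x := by
    rw [← Finset.sum_biUnion]
    · apply Finset.sum_congr _ (fun _ _ => rfl)
      ext x
      simp only [Finset.mem_biUnion, Finset.mem_inter]
      constructor
      · intro hx
        obtain ⟨i, hi, hxi⟩ := Finset.mem_biUnion.1 (hR hx)
        exact ⟨i, hi, hx, hxi⟩
      · rintro ⟨i, hi, hx, _⟩; exact hx
    · intro a _ b _ hab
      exact (hdisj a b hab).mono Finset.inter_subset_right Finset.inter_subset_right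
  rw [hdecomp, sum_range_even_odd] at hweight
  -- odd rows
  have hodd : ∑ t ∈ range n, ∑ x ∈ R ∩ S (2*t+1), w x =
      (k * B : ℚ) + ∑ t ∈ (range n).filter (fun t => φ t = j), v t := by
    have h1 : ∀ t ∈ range n, ∑ x ∈ R ∩ S (2*t+1), w x =
        (if φ t = j then 2 else 1) * v t := by
      intro t ht
      rw [Finset.mem_range] at ht
      rw [gconst _ _ (hweven t ht)]
      by_cases hφ : φ t = j
      · rw [hRdup t ht hφ, if_pos hφ]; norm_num
      · rw [hRone (2*t+1) (Finset.mem_range.2 (by omega)) ?_, if_neg hφ]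
        · norm_num
        · rintro ⟨t', ht', heq, hφ'⟩
          have : t = t' := by omega
          exact hφ (this ▸ hφ')
    rw [Finset.sum_congr rfl h1,
      ← Finset.sum_filter_add_sum_filter_not (range n) (fun t => φ t = j)]
    have h2 : ∀ t ∈ (range n).filter (fun t => φ t = j),
        (if φ t = j then (2:ℚ) else 1) * v t = v t + v t := by
      intro t ht
      rw [if_pos (Finset.mem_filter.1 ht).2]; ring
    have h3 : ∀ t ∈ (range n).filter (fun t => ¬ φ t = j),
        (if φ t = j then (2:ℚ) else 1) * v t = v t := by
      intro t ht
      rw [if_neg (Finset.mem_filter.1 ht).2]; ring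
    rw [Finset.sum_congr rfl h2, Finset.sum_congr rfl h3, Finset.sum_add_distrib]
    have h4 := Finset.sum_filter_add_sum_filter_not (range n) (fun t => φ t = j) v
    rw [hvsum] at h4
    linarith
  -- even rows
  obtain ⟨m, rfl⟩ : ∃ m, n = m + 2 := ⟨n - 2, by omega⟩
  have heven : ∑ t ∈ range ((m+2)+1), ∑ x ∈ R ∩ S (2*t), w x =
      ((k*B:ℚ))^2 + ((k*B:ℚ))^4 + 1/2 := by
    rw [sum_range_succ, Finset.sum_range_succ' (fun t => ∑ x ∈ R ∩ S (2*t), w x) (m+1)]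
    have hzero : ∑ x ∈ R ∩ S (2*0), w x = ((k*B:ℚ))^2 := by
      rw [show 2*0 = 0 from rfl, gconst 0 _ hw0,
        hRone 0 (Finset.mem_range.2 (by omega)) (by rintro ⟨t, _, h, _⟩; omega)]
      norm_num
    have hlast : ∑ x ∈ R ∩ S (2*(m+2)), w x = ((k*B:ℚ))^4 := by
      rw [gconst _ _ hwlast,
        hRone (2*(m+2)) (Finset.mem_range.2 (by omega)) (by rintro ⟨t, _, h, _⟩; omega)]
      norm_num
    have hmid : ∀ t ∈ range (m+1), ∑ x ∈ R ∩ S (2*(t+1)), w x =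
        1 / (2 * ((m:ℚ)+2) - 2) := by
      intro t ht
      rw [Finset.mem_range] at ht
      have := hwodd (2*(t+1)) ⟨t+1, by ring⟩ (by omega) (by omega) (by omega)
      rw [gconst _ _ this,
        hRone (2*(t+1)) (Finset.mem_range.2 (by omega)) (by rintro ⟨t', _, h, _⟩; omega)]
      push_cast
      norm_num
    rw [hzero, hlast, Finset.sum_congr rfl hmid, Finset.sum_const, nsmul_eq_mul, Finset.card_range,
      Nat.cast_add, Nat.cast_one]
    have hne : (2 * ((m:ℚ)+2) - 2) ≠ 0 := by
      have : (0:ℚ) ≤ (m:ℚ) := Nat.cast_nonneg m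
      intro h; nlinarith
    have hm1 : (1 + (m:ℚ)) ≠ 0 := by positivity
    field_simp
    ring_nf
    field_simp
    ring
  rw [hodd, heven] at hweight
  linarith
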